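/- Let k be a field, let A = k[x,y]_{(x,y)} with maximal ideal m, and let I = (x², y²). Then the integral closure of I^n equals m^{2n} for every n ≥ 1, and λ(Ī^n/I^n) = n for every n ≥ 1. -/

import Mathlib

open IsLocalRing Filter Polynomial

noncomputable section
set_option synthInstance.maxHeartbeats 1000000
set_option maxHeartbeats 2000000
set_option linter.unusedVariables false

/-- The length `λ(M)` of a module: the supremum of the lengths of chains of submodules
(an element of `WithBot ℕ∞`), truncated to a natural number. -/
noncomputable def lamNat (R M : Type*) [Ring R] [AddCommGroup M] [Module R M] : ℕ :=
  ENat.toNat (WithBot.unbotD 0 (Order.krullDim (Submodule R M)))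

/-- The set of elements integral over an ideal `J`: `x` satisfying a monic equation
`x^r + a₁ x^(r-1) + ⋯ + a_r = 0` with `aᵢ ∈ Jⁱ`. -/
def Ideal.intClSet {A : Type} [CommRing A] (J : Ideal A) : Set A :=
  {x | ∃ r : ℕ, 0 < r ∧ ∃ a : ℕ → A, (∀ i, 1 ≤ i → i ≤ r → a i ∈ J ^ i) ∧
    x ^ r + ∑ i ∈ Finset.Icc 1 r, a i * x ^ (r - i) = 0}

/-- The integral closure `J̄` of an ideal `J`. -/
def Ideal.intCl {A : Type} [CommRing A] (J : Ideal A) : Ideal A := Ideal.span J.intClSet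


/-- The maximal ideal `(x,y)` of `k[x,y]`. -/
abbrev mxy (k : Type) [Field k] : Ideal (MvPolynomial (Fin 2) k) :=
  Ideal.span {MvPolynomial.X 0, MvPolynomial.X 1}

/-- The local ring `A = k[x,y]_(x,y)`. -/
abbrev locA (k : Type) [Field k] [(mxy k).IsPrime] : Type :=
  Localization.AtPrime (mxy k)

/-- The ideal `I = (x², y²)` of `A`. -/
noncomputable abbrev idealI (k : Type) [Field k] [(mxy k).IsPrime] : Ideal (locA k) :=
  Ideal.span {algebraMap (MvPolynomial (Fin 2) k) (locA k) (MvPolynomial.X 0 ^ 2),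
    algebraMap (MvPolynomial (Fin 2) k) (locA k) (MvPolynomial.X 1 ^ 2)}

section Ex19work
open MvPolynomial IsLocalRing
set_option linter.unusedSectionVars false
namespace Ex19

abbrev R (k : Type) [Field k] := MvPolynomial (Fin 2) k

variable {k : Type} [Field k]


def wmono (w : (Fin 2 →₀ ℕ) → ℕ) : Prop :=
  (∀ u v : Fin 2 →₀ ℕ, u ≤ v → w u ≤ w v) ∧ (∀ u v : Fin 2 →₀ ℕ, w u + w v ≤ w (u + v))

def wdeg (d : Fin 2 →₀ ℕ) : ℕ := d 0 + d 1
def w2 (d : Fin 2 →₀ ℕ) : ℕ := d 0 / 2 + d 1 / 2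

lemma wdeg_mono : wmono wdeg := by
  refine ⟨fun u v h => ?_, fun u v => ?_⟩ <;> simp [wdeg, Finsupp.add_apply]
  · exact add_le_add (h 0) (h 1)
  · omega

lemma w2_mono : wmono w2 := by
  refine ⟨fun u v h => ?_, fun u v => ?_⟩ <;> simp [w2, Finsupp.add_apply]
  · exact add_le_add (Nat.div_le_div_right (h 0)) (Nat.div_le_div_right (h 1))
  · omega

section W
variable (w : (Fin 2 →₀ ℕ) → ℕ)

def wIdeal (hw : wmono w) (j : ℕ) : Ideal (R k) where
  carrier := {f | ∀ d, w d < j → MvPolynomial.coeff d f = 0}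
  add_mem' := fun hf hg d hd => by simp [MvPolynomial.coeff_add, hf d hd, hg d hd]
  zero_mem' := fun d hd => by simp
  smul_mem' := by
    intro r f hf d hd
    rw [smul_eq_mul, MvPolynomial.coeff_mul]
    apply Finset.sum_eq_zero
    rintro ⟨u, v⟩ huv
    rw [Finset.HasAntidiagonal.mem_antidiagonal] at huv
    have hv : v ≤ d := huv ▸ le_add_self
    rw [hf v (lt_of_le_of_lt (hw.1 v d hv) hd), mul_zero]

lemma mem_wIdeal {hw : wmono w} {j : ℕ} {f : R k} :
    f ∈ wIdeal w hw j ↔ ∀ d, w d < j → MvPolynomial.coeff d f = 0 := Iff.rfl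

lemma wIdeal_mul_le {hw : wmono w} (a b : ℕ) :
    wIdeal (k := k) w hw a * wIdeal w hw b ≤ wIdeal w hw (a + b) := by
  rw [Ideal.mul_le]
  intro f hf g hg d hd
  rw [MvPolynomial.coeff_mul]
  apply Finset.sum_eq_zero
  rintro ⟨u, v⟩ huv
  rw [Finset.HasAntidiagonal.mem_antidiagonal] at huv
  have : w u + w v < a + b := lt_of_le_of_lt (huv ▸ hw.2 u v) hd
  rcases lt_or_ge (w u) a with h | h
  · rw [hf u h, zero_mul]
  · rw [hg v (by omega), mul_zero]

/-- saturation: can cancel elements with nonzero constant coefficient -/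
lemma wIdeal_sat {hw : wmono w} {j : ℕ} {s f : R k} (hs : MvPolynomial.coeff 0 s ≠ 0)
    (h : s * f ∈ wIdeal w hw j) : f ∈ wIdeal w hw j := by
  by_contra hf
  rw [mem_wIdeal] at hf
  push_neg at hf
  -- pick a bad d of minimal total degree
  set B := f.support.filter (fun d => w d < j) with hB
  have hBne : B.Nonempty := by
    obtain ⟨d, hd1, hd2⟩ := hf
    exact ⟨d, Finset.mem_filter.2 ⟨MvPolynomial.mem_support_iff.2 hd2, hd1⟩⟩
  obtain ⟨d, hdB, hdmin⟩ := B.exists_min_image (fun d => d 0 + d 1) hBne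
  rw [hB, Finset.mem_filter, MvPolynomial.mem_support_iff] at hdB
  have hc : MvPolynomial.coeff d (s * f) = 0 := h d hdB.2
  rw [MvPolynomial.coeff_mul] at hc
  rw [Finset.sum_eq_single ((0 : Fin 2 →₀ ℕ), d)] at hc
  · exact hdB.1 (by simpa using (mul_eq_zero.1 hc).resolve_left hs)
  · rintro ⟨u, v⟩ huv hne
    rw [Finset.HasAntidiagonal.mem_antidiagonal] at huv
    by_cases hu : u = 0
    · have hvd : v = d := by rw [hu, zero_add] at huv; exact huv
      exact absurd (by rw [hu, hvd]) hne
    · -- v < d in degree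
      have hvd : v ≤ d := huv ▸ le_add_self
      by_cases hfv : MvPolynomial.coeff v f = 0
      · rw [hfv, mul_zero]
      · exfalso
        have hvB : v ∈ B := Finset.mem_filter.2 ⟨MvPolynomial.mem_support_iff.2 hfv,
          lt_of_le_of_lt (hw.1 v d hvd) hdB.2⟩
        have := hdmin v hvB
        -- but degree v < degree d since u ≠ 0
        have hu0 : u 0 + u 1 ≠ 0 := by
          intro h0
          apply hu
          ext i
          fin_cases i <;> simp <;> omega
        have : d 0 + d 1 = (u 0 + u 1) + (v 0 + v 1) := by
          rw [← huv]; simp [Finsupp.add_apply]; ring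
        omega
  · intro hmem
    exact absurd (Finset.HasAntidiagonal.mem_antidiagonal.2 (by simp)) hmem

end W


lemma monomial_mem_wIdeal {w} {hw : wmono w} {j : ℕ} {d : Fin 2 →₀ ℕ} (c : k)
    (h : j ≤ w d) : MvPolynomial.monomial d c ∈ wIdeal w hw j := by
  intro e he
  rw [MvPolynomial.coeff_monomial]
  split
  · next hde => exact absurd (hde ▸ h) (by omega)
  · rfl

abbrev Q (k : Type) [Field k] : Ideal (R k) := Ideal.span {MvPolynomial.X 0 ^ 2, MvPolynomial.X 1 ^ 2}

lemma monomial_eq' (d : Fin 2 →₀ ℕ) (c : k) : MvPolynomial.monomial d c = MvPolynomial.C c * MvPolynomial.X 0 ^ (d 0) * MvPolynomial.X 1 ^ (d 1) := by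
  rw [MvPolynomial.monomial_eq, Finsupp.prod_fintype _ _ (fun i => pow_zero _), Fin.prod_univ_two, mul_assoc]

lemma P_pow_eq (j : ℕ) : mxy k ^ j = wIdeal wdeg wdeg_mono j := by
  apply le_antisymm
  · induction j with
    | zero =>
      intro f _ d hd
      exact absurd hd (by omega)
    | succ j ih =>
      rw [pow_succ]
      calc mxy k ^ j * mxy k ≤ wIdeal wdeg wdeg_mono j * wIdeal wdeg wdeg_mono 1 := by
            apply mul_le_mul' ih
            rw [Ideal.span_le]
            rintro x (rfl | rfl) <;> intro d hd <;>
              · have : d = 0 := by ext i; fin_cases i <;> simp [wdeg] at hd ⊢ <;> omega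
                subst this
                simp
        _ ≤ wIdeal wdeg wdeg_mono (j + 1) := wIdeal_mul_le wdeg j 1
  · intro f hf
    rw [← MvPolynomial.support_sum_monomial_coeff f]
    apply Ideal.sum_mem
    intro d hd
    by_cases hj : j ≤ wdeg d
    · rw [monomial_eq' d]
      have h0 : (MvPolynomial.X 0 : R k) ^ (d 0) * MvPolynomial.X 1 ^ (d 1) ∈ mxy k ^ (d 0 + d 1) := by
        rw [pow_add]
        exact Ideal.mul_mem_mul (Ideal.pow_mem_pow (Ideal.subset_span (by simp)) _)
          (Ideal.pow_mem_pow (Ideal.subset_span (by simp)) _)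
      rw [mul_assoc]
      exact Ideal.mul_mem_left _ _ (Ideal.pow_le_pow_right hj h0)
    · rw [hf d (by omega)]
      simp

lemma Q_pow_eq (n : ℕ) : Q k ^ n = wIdeal w2 w2_mono n := by
  apply le_antisymm
  · induction n with
    | zero =>
      intro f _ d hd
      exact absurd hd (by omega)
    | succ n ih =>
      rw [pow_succ]
      calc Q k ^ n * Q k ≤ wIdeal w2 w2_mono n * wIdeal w2 w2_mono 1 := by
            apply mul_le_mul' ih
            rw [Ideal.span_le]
            rintro x (rfl | rfl)
            · rw [MvPolynomial.X_pow_eq_monomial]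
              exact monomial_mem_wIdeal _ (by simp [w2])
            · rw [MvPolynomial.X_pow_eq_monomial]
              exact monomial_mem_wIdeal _ (by simp [w2])
        _ ≤ wIdeal w2 w2_mono (n + 1) := wIdeal_mul_le w2 n 1
  · intro f hf
    rw [← MvPolynomial.support_sum_monomial_coeff f]
    apply Ideal.sum_mem
    intro d hd
    by_cases hn : n ≤ w2 d
    · have e0 : (MvPolynomial.X 0 : R k) ^ (d 0) = (MvPolynomial.X 0 ^ 2) ^ (d 0 / 2) * MvPolynomial.X 0 ^ (d 0 % 2) := by
        rw [← pow_mul, ← pow_add]; congr 1; omega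
      have e1 : (MvPolynomial.X 1 : R k) ^ (d 1) = (MvPolynomial.X 1 ^ 2) ^ (d 1 / 2) * MvPolynomial.X 1 ^ (d 1 % 2) := by
        rw [← pow_mul, ← pow_add]; congr 1; omega
      have h0 : ((MvPolynomial.X 0 : R k) ^ 2) ^ (d 0 / 2) * (MvPolynomial.X 1 ^ 2) ^ (d 1 / 2) ∈ Q k ^ (w2 d) := by
        rw [w2, pow_add]
        exact Ideal.mul_mem_mul (Ideal.pow_mem_pow (Ideal.subset_span (by simp)) _)
          (Ideal.pow_mem_pow (Ideal.subset_span (by simp)) _)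
      have key : ((MvPolynomial.X 0 : R k) ^ 2) ^ (d 0 / 2) * (MvPolynomial.X 1 ^ 2) ^ (d 1 / 2) ∈ Q k ^ n :=
        Ideal.pow_le_pow_right hn h0
      have : MvPolynomial.monomial d (MvPolynomial.coeff d f) =
          (MvPolynomial.C (MvPolynomial.coeff d f) * MvPolynomial.X 0 ^ (d 0 % 2) * MvPolynomial.X 1 ^ (d 1 % 2)) *
            (((MvPolynomial.X 0 : R k) ^ 2) ^ (d 0 / 2) * (MvPolynomial.X 1 ^ 2) ^ (d 1 / 2)) := by
        rw [monomial_eq' d, e0, e1]; ring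
      rw [this]
      exact Ideal.mul_mem_left _ _ key
    · rw [hf d (by omega)]
      simp


lemma deg_eq (d : Fin 2 →₀ ℕ) : d.degree = d 0 + d 1 := by
  rw [Finsupp.degree, ← Fin.sum_univ_two (fun i => d i)]
  exact Finset.sum_subset (Finset.subset_univ _) (fun i _ hi => Finsupp.notMem_support_iff.1 hi)

lemma ord_mul {f g : MvPolynomial (Fin 2) k} {a b : ℕ}
    (hf : ∀ d : Fin 2 →₀ ℕ, d 0 + d 1 < a → MvPolynomial.coeff d f = 0)
    (hg : ∀ d : Fin 2 →₀ ℕ, d 0 + d 1 < b → MvPolynomial.coeff d g = 0)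
    (hfa : ¬ ∀ d : Fin 2 →₀ ℕ, d 0 + d 1 < a + 1 → MvPolynomial.coeff d f = 0)
    (hgb : ¬ ∀ d : Fin 2 →₀ ℕ, d 0 + d 1 < b + 1 → MvPolynomial.coeff d g = 0) :
    ¬ ∀ d : Fin 2 →₀ ℕ, d 0 + d 1 < a + b + 1 → MvPolynomial.coeff d (f * g) = 0 := by
  push_neg at hfa hgb ⊢
  set F := MvPolynomial.homogeneousComponent a f with hF
  set G := MvPolynomial.homogeneousComponent b g with hG
  have hFne : F ≠ 0 := by
    obtain ⟨d, hd1, hd2⟩ := hfa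
    have hda : d 0 + d 1 = a := by
      by_contra h
      exact hd2 (hf d (by omega))
    intro h0
    apply hd2
    have := MvPolynomial.coeff_homogeneousComponent (n := a) (φ := f) d
    rw [← hF, h0, deg_eq, hda, if_pos rfl] at this
    simpa using this.symm
  have hGne : G ≠ 0 := by
    obtain ⟨d, hd1, hd2⟩ := hgb
    have hdb : d 0 + d 1 = b := by
      by_contra h
      exact hd2 (hg d (by omega))
    intro h0
    apply hd2
    have := MvPolynomial.coeff_homogeneousComponent (n := b) (φ := g) d
    rw [← hG, h0, deg_eq, hdb, if_pos rfl] at this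
    simpa using this.symm
  have hFGne : F * G ≠ 0 := mul_ne_zero hFne hGne
  have hFGhom : (F * G).IsHomogeneous (a + b) :=
    (MvPolynomial.homogeneousComponent_isHomogeneous a f).mul (MvPolynomial.homogeneousComponent_isHomogeneous b g)
  obtain ⟨d, hd⟩ : ∃ d, MvPolynomial.coeff d (F * G) ≠ 0 := by
    by_contra h
    push_neg at h
    exact hFGne (MvPolynomial.ext _ _ (by simpa using h))
  have hdeg : d 0 + d 1 = a + b := by
    have := hFGhom.coeff_eq_zero (d := d)
    rw [deg_eq] at this
    by_contra hne
    exact hd (this hne)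
  refine ⟨d, by omega, ?_⟩
  have : MvPolynomial.coeff d (f * g) = MvPolynomial.coeff d (F * G) := by
    rw [MvPolynomial.coeff_mul, MvPolynomial.coeff_mul]
    apply Finset.sum_congr rfl
    rintro ⟨u, v⟩ huv
    rw [Finset.HasAntidiagonal.mem_antidiagonal] at huv
    have hsum : u 0 + u 1 + (v 0 + v 1) = a + b := by
      have h0 : u 0 + v 0 = d 0 := by rw [← huv]; simp
      have h1 : u 1 + v 1 = d 1 := by rw [← huv]; simp
      omega
    have cF : MvPolynomial.coeff u F = if u 0 + u 1 = a then MvPolynomial.coeff u f else 0 := by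
      rw [hF, MvPolynomial.coeff_homogeneousComponent, deg_eq]
    have cG : MvPolynomial.coeff v G = if v 0 + v 1 = b then MvPolynomial.coeff v g else 0 := by
      rw [hG, MvPolynomial.coeff_homogeneousComponent, deg_eq]
    rcases lt_trichotomy (u 0 + u 1) a with h | h | h
    · rw [hf u h, cF, if_neg (by omega), zero_mul, zero_mul]
    · rw [cF, if_pos h, cG, if_pos (by omega)]
    · rw [hg v (by omega), cG, if_neg (by omega), mul_zero, mul_zero]
  rw [this]
  exact hd


section Loc
variable [(mxy k).IsPrime]

def satd (J : Ideal (R k)) : Prop :=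
  ∀ s f : R k, MvPolynomial.coeff 0 s ≠ 0 → s * f ∈ J → f ∈ J

lemma alg_injective : Function.Injective (algebraMap (R k) (locA k)) :=
  IsLocalization.injective (locA k) (mxy k).primeCompl_le_nonZeroDivisors

lemma mem_map_iff_of_satd {J : Ideal (R k)} (hJ : satd J)
    (hJ0 : ∀ s : R k, s ∈ (mxy k).primeCompl → MvPolynomial.coeff 0 s ≠ 0)
    {z : locA k} {s : R k} (hs : s ∈ (mxy k).primeCompl) {f : R k}
    (hz : z * algebraMap (R k) (locA k) s = algebraMap (R k) (locA k) f) :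
    z ∈ J.map (algebraMap (R k) (locA k)) ↔ f ∈ J := by
  constructor
  · intro h
    obtain ⟨⟨⟨g, hg⟩, ⟨t, ht⟩⟩, hx⟩ :=
      (IsLocalization.mem_map_algebraMap_iff (mxy k).primeCompl (locA k)).1 h
    simp only at hx
    -- z * t = g  (in A);  so f * t = g * s in R
    have : algebraMap (R k) (locA k) (f * t) = algebraMap (R k) (locA k) (g * s) := by
      rw [map_mul, map_mul, ← hz, mul_comm z _, mul_assoc, hx]
      ring
    have := alg_injective this
    exact hJ t f (hJ0 t ht) (by rw [mul_comm]; rw [this]; exact J.mul_mem_right s hg)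
  · intro h
    have hu : IsUnit (algebraMap (R k) (locA k) s) :=
      IsLocalization.map_units (locA k) (⟨s, hs⟩ : (mxy k).primeCompl)
    obtain ⟨u, hu⟩ := hu
    have : z = algebraMap (R k) (locA k) f * ↑u⁻¹ := by
      rw [← hz, ← hu, mul_assoc, Units.mul_inv, mul_one]
    rw [this]
    exact Ideal.mul_mem_right _ _ (Ideal.mem_map_of_mem _ h)

lemma exists_rep (z : locA k) : ∃ (f s : R k), s ∈ (mxy k).primeCompl ∧
    z * algebraMap (R k) (locA k) s = algebraMap (R k) (locA k) f := by
  obtain ⟨⟨f, ⟨s, hs⟩⟩, h⟩ := IsLocalization.surj (mxy k).primeCompl z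
  exact ⟨f, s, hs, h⟩

lemma maxIdeal_pow (j : ℕ) :
    maximalIdeal (locA k) ^ j = ((mxy k) ^ j).map (algebraMap (R k) (locA k)) := by
  rw [Ideal.map_pow, Localization.AtPrime.map_eq_maximalIdeal]


end Loc

section Main
variable [(mxy k).IsPrime]

lemma mem_P_iff {f : R k} : f ∈ mxy k ↔ MvPolynomial.coeff 0 f = 0 := by
  constructor
  · intro h
    have h2 : f ∈ wIdeal wdeg wdeg_mono 1 := by
      rw [← P_pow_eq, pow_one]; exact h
    exact h2 0 (by simp [wdeg])
  · intro h
    rw [← pow_one (mxy k), P_pow_eq]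
    intro d hd
    have : d = 0 := by
      ext i
      fin_cases i <;> simp [wdeg] at hd ⊢ <;> omega
    rwa [this]

lemma coeff0_primeCompl {s : R k} (h : s ∈ (mxy k).primeCompl) : MvPolynomial.coeff 0 s ≠ 0 :=
  fun hc => h (mem_P_iff.2 hc)

lemma satP (j : ℕ) : satd (mxy k ^ j) := by
  rw [P_pow_eq]
  intro s f hs hsf
  exact wIdeal_sat wdeg hs hsf

lemma satQ (n : ℕ) : satd (Q k ^ n) := by
  rw [Q_pow_eq]
  intro s f hs hsf
  exact wIdeal_sat w2 hs hsf

lemma mem_maxpow_iff {z : locA k} {s f : R k} (hs : s ∈ (mxy k).primeCompl)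
    (hz : z * algebraMap (R k) (locA k) s = algebraMap (R k) (locA k) f) (j : ℕ) :
    z ∈ maximalIdeal (locA k) ^ j ↔ f ∈ mxy k ^ j := by
  rw [maxIdeal_pow]
  exact mem_map_iff_of_satd (satP j) (fun t ht => coeff0_primeCompl ht) hs hz

lemma idealI_eq : idealI k = (Q k).map (algebraMap (R k) (locA k)) := by
  rw [Ideal.map_span, Set.image_insert_eq, Set.image_singleton]

lemma Ipow_eq (n : ℕ) : idealI k ^ n = (Q k ^ n).map (algebraMap (R k) (locA k)) := by
  rw [idealI_eq, Ideal.map_pow]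

lemma mem_Ipow_iff {z : locA k} {s f : R k} (hs : s ∈ (mxy k).primeCompl)
    (hz : z * algebraMap (R k) (locA k) s = algebraMap (R k) (locA k) f) (n : ℕ) :
    z ∈ idealI k ^ n ↔ f ∈ Q k ^ n := by
  rw [Ipow_eq]
  exact mem_map_iff_of_satd (satQ n) (fun t ht => coeff0_primeCompl ht) hs hz

lemma Qn_le_P2n (n : ℕ) : Q k ^ n ≤ mxy k ^ (2 * n) := by
  rw [Q_pow_eq, P_pow_eq]
  intro f hf d hd
  apply hf
  simp only [w2, wdeg] at *
  omega

lemma P2n1_le_Qn (n : ℕ) : mxy k ^ (2 * n + 1) ≤ Q k ^ n := by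
  rw [Q_pow_eq, P_pow_eq]
  intro f hf d hd
  apply hf
  simp only [w2, wdeg] at *
  omega

lemma I_le_m2n (n : ℕ) : idealI k ^ n ≤ maximalIdeal (locA k) ^ (2 * n) := by
  rw [Ipow_eq, maxIdeal_pow]
  exact Ideal.map_mono (Qn_le_P2n n)

lemma ord_pow {f : R k} {e : ℕ} (hf1 : f ∈ wIdeal wdeg wdeg_mono e)
    (hf2 : f ∉ wIdeal wdeg wdeg_mono (e + 1)) :
    ∀ r, 1 ≤ r → f ^ r ∈ wIdeal wdeg wdeg_mono (r * e) ∧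
      f ^ r ∉ wIdeal wdeg wdeg_mono (r * e + 1) := by
  intro r hr
  induction r with
  | zero => omega
  | succ r ih =>
    rcases Nat.eq_or_lt_of_le hr with h | h
    · rw [← h]
      simpa using ⟨hf1, hf2⟩
    · have ih := ih (by omega)
      have hre : (r + 1) * e = r * e + e := by ring
      have hin : f ^ (r + 1) ∈ wIdeal wdeg wdeg_mono ((r + 1) * e) := by
        have h2 := wIdeal_mul_le (k := k) (hw := wdeg_mono) wdeg (r * e) e
          (Ideal.mul_mem_mul ih.1 hf1)
        rw [← pow_succ] at h2
        rw [hre]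
        exact h2
      refine ⟨hin, ?_⟩
      have hnm := ord_mul (k := k) (a := r * e) (b := e) ih.1 hf1 ih.2 hf2
      rw [← pow_succ] at hnm
      rw [hre]
      exact hnm

def fin2 (a b : ℕ) : Fin 2 →₀ ℕ := Finsupp.single 0 a + Finsupp.single 1 b

@[simp] lemma fin2_apply0 (a b : ℕ) : fin2 a b 0 = a := by
  simp [fin2, Finsupp.single_apply]

@[simp] lemma fin2_apply1 (a b : ℕ) : fin2 a b 1 = b := by
  simp [fin2, Finsupp.single_apply]

lemma zmon_mem_intClSet {n a b : ℕ} (hab : a + b = 2 * n) :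
    algebraMap (R k) (locA k) (MvPolynomial.X 0 ^ a * MvPolynomial.X 1 ^ b) ∈ Ideal.intClSet (idealI k ^ n) := by
  set z := algebraMap (R k) (locA k) (MvPolynomial.X 0 ^ a * MvPolynomial.X 1 ^ b) with hz
  refine ⟨2, by omega, fun i => if i = 2 then -z ^ 2 else 0, ?_, ?_⟩
  · intro i h1 h2
    interval_cases i
    · simp
    · simp only [if_pos rfl]
      apply neg_mem
      have : z ^ 2 = algebraMap (R k) (locA k) ((MvPolynomial.X 0 ^ 2) ^ a * (MvPolynomial.X 1 ^ 2) ^ b) := by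
        rw [hz, ← map_pow]
        congr 1
        ring
      rw [this, ← pow_mul, Ipow_eq]
      apply Ideal.mem_map_of_mem
      have : (MvPolynomial.X 0 ^ 2 : R k) ^ a * (MvPolynomial.X 1 ^ 2) ^ b ∈ Q k ^ (a + b) := by
        rw [pow_add]
        exact Ideal.mul_mem_mul (Ideal.pow_mem_pow (Ideal.subset_span (by simp)) _)
          (Ideal.pow_mem_pow (Ideal.subset_span (by simp)) _)
      rwa [show a + b = n * 2 by omega] at this
  · have hIcc : Finset.Icc 1 2 = ({1, 2} : Finset ℕ) := rfl
    rw [hIcc, Finset.sum_insert (by decide), Finset.sum_singleton]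
    norm_num

theorem part1 (n : ℕ) (hn : 1 ≤ n) :
    Ideal.intCl (idealI k ^ n) = maximalIdeal (locA k) ^ (2 * n) := by
  apply le_antisymm
  · rw [Ideal.intCl, Ideal.span_le]
    intro z hz
    obtain ⟨r, hr, a, ha, heq⟩ := hz
    simp only [SetLike.mem_coe]
    by_contra hz2n
    classical
    have hex : ∃ j, z ∉ maximalIdeal (locA k) ^ j := ⟨2 * n, hz2n⟩
    have hj0spec := Nat.find_spec hex
    set j0 := Nat.find hex with hj0
    have hj0pos : 0 < j0 := by
      rcases Nat.eq_zero_or_pos j0 with h | h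
      · rw [h, pow_zero, Ideal.one_eq_top] at hj0spec
        exact absurd Submodule.mem_top hj0spec
      · exact h
    have hj0le : j0 ≤ 2 * n := Nat.find_le hz2n
    set e := j0 - 1 with he
    have he1 : z ∈ maximalIdeal (locA k) ^ e := by
      by_contra h
      exact Nat.find_min hex (show e < j0 by omega) h
    have he2 : z ∉ maximalIdeal (locA k) ^ (e + 1) := by
      rw [show e + 1 = j0 by omega]
      exact hj0spec
    have hen : e + 1 ≤ 2 * n := by omega
    obtain ⟨f, s, hs, hzs⟩ := exists_rep z
    have hf1 : f ∈ mxy k ^ e := (mem_maxpow_iff hs hzs e).1 he1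
    have hf2 : f ∉ mxy k ^ (e + 1) := fun h => he2 ((mem_maxpow_iff hs hzs (e + 1)).2 h)
    rw [P_pow_eq] at hf1 hf2
    have hford := ord_pow hf1 hf2 r hr
    rw [← P_pow_eq] at hford
    have hzsr : z ^ r * algebraMap (R k) (locA k) (s ^ r) = algebraMap (R k) (locA k) (f ^ r) := by
      rw [map_pow, map_pow, ← mul_pow, hzs]
    have hford2 : f ^ r ∉ mxy k ^ (r * e + 1) := by
      rw [P_pow_eq]
      exact hford.2
    have hzrnotin : z ^ r ∉ maximalIdeal (locA k) ^ (r * e + 1) :=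
      fun h => hford2 ((mem_maxpow_iff (pow_mem hs r) hzsr (r * e + 1)).1 h)
    apply hzrnotin
    have hzr : z ^ r = -(∑ i ∈ Finset.Icc 1 r, a i * z ^ (r - i)) :=
      eq_neg_of_add_eq_zero_left heq
    rw [hzr]
    apply neg_mem
    apply Ideal.sum_mem
    intro i hi
    rw [Finset.mem_Icc] at hi
    have h1 : a i ∈ maximalIdeal (locA k) ^ (2 * n * i) := by
      have hmem : a i ∈ (idealI k ^ n) ^ i := ha i hi.1 hi.2
      have hle : (idealI k ^ n) ^ i ≤ (maximalIdeal (locA k) ^ (2 * n)) ^ i :=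
        Ideal.pow_right_mono (I_le_m2n n) i
      rw [← pow_mul] at hmem
      rw [← pow_mul, ← pow_mul] at hle
      exact hle hmem
    have h2 : z ^ (r - i) ∈ maximalIdeal (locA k) ^ (e * (r - i)) := by
      rw [pow_mul]
      exact Ideal.pow_mem_pow he1 _
    have h3 := Ideal.mul_mem_mul h1 h2
    rw [← pow_add] at h3
    have hexp : r * e + 1 ≤ 2 * n * i + e * (r - i) := by
      obtain ⟨m, rfl⟩ := Nat.exists_eq_add_of_le hi.2
      have : 2 * n * i ≥ (e + 1) * i := Nat.mul_le_mul_right i hen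
      have h4 : i ≥ 1 := hi.1
      nlinarith [Nat.add_sub_cancel_left i m]
    exact Ideal.pow_le_pow_right hexp h3
  · rw [maxIdeal_pow, Ideal.map_le_iff_le_comap]
    intro f hf
    simp only [Ideal.mem_comap]
    rw [P_pow_eq] at hf
    rw [← MvPolynomial.support_sum_monomial_coeff f, map_sum]
    apply Ideal.sum_mem
    intro d hd
    have hdeg : 2 * n ≤ wdeg d := by
      by_contra h
      exact (MvPolynomial.mem_support_iff.1 hd) (hf d (by omega))
    set a := min (d 0) (2 * n) with ha
    set b := 2 * n - a with hb
    have hble : b ≤ d 1 := by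
      simp only [wdeg] at hdeg
      omega
    have hab : a + b = 2 * n := by omega
    have hle : fin2 a b ≤ d := by
      rw [Finsupp.le_def]
      intro i
      fin_cases i
      · simpa using by omega
      · simpa using hble
    have key : MvPolynomial.monomial d (MvPolynomial.coeff d f) =
        MvPolynomial.monomial (d - fin2 a b) (MvPolynomial.coeff d f) * (MvPolynomial.X 0 ^ a * MvPolynomial.X 1 ^ b) := by
      have hsum : d - fin2 a b + (Finsupp.single (0 : Fin 2) a + Finsupp.single 1 b) = d := by
        rw [show Finsupp.single (0 : Fin 2) a + Finsupp.single 1 b = fin2 a b from rfl,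
          tsub_add_cancel_of_le hle]
      rw [MvPolynomial.X_pow_eq_monomial, MvPolynomial.X_pow_eq_monomial, MvPolynomial.monomial_mul, MvPolynomial.monomial_mul, mul_one, mul_one,
        hsum]
    rw [key, map_mul]
    exact Ideal.mul_mem_left _ _
      (Ideal.subset_span (zmon_mem_intClSet hab))

-- PART2A
omit [(mxy k).IsPrime] in
@[simp] lemma w2_sigma {n i : ℕ} (hi : i < n) :
    w2 (fin2 (2 * i + 1) (2 * (n - 1 - i) + 1)) = n - 1 := by
  simp only [w2, fin2_apply0, fin2_apply1]
  omega

def zp (k : Type) [Field k] (n i : ℕ) : R k := MvPolynomial.X 0 ^ (2 * i + 1) * MvPolynomial.X 1 ^ (2 * (n - 1 - i) + 1)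

def zm (k : Type) [Field k] [(mxy k).IsPrime] (n i : ℕ) : locA k :=
  algebraMap (R k) (locA k) (zp k n i)

omit [(mxy k).IsPrime] in
lemma zp_eq_monomial (n i : ℕ) :
    zp k n i = MvPolynomial.monomial (fin2 (2 * i + 1) (2 * (n - 1 - i) + 1)) 1 := by
  rw [zp, MvPolynomial.X_pow_eq_monomial, MvPolynomial.X_pow_eq_monomial, MvPolynomial.monomial_mul, mul_one]
  rfl

lemma zm_mem_m2n {n i : ℕ} (hi : i < n) : zm k n i ∈ maximalIdeal (locA k) ^ (2 * n) := by
  rw [maxIdeal_pow]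
  apply Ideal.mem_map_of_mem
  rw [P_pow_eq, zp_eq_monomial]
  apply monomial_mem_wIdeal
  simp only [wdeg, fin2_apply0, fin2_apply1]
  omega

lemma m2n1_le_In (n : ℕ) : maximalIdeal (locA k) ^ (2 * n + 1) ≤ idealI k ^ n := by
  rw [maxIdeal_pow, Ipow_eq]
  exact Ideal.map_mono (P2n1_le_Qn n)

lemma algMem_Ipow_iff {h : R k} {n : ℕ} :
    algebraMap (R k) (locA k) h ∈ idealI k ^ n ↔ h ∈ Q k ^ n := by
  refine mem_Ipow_iff (s := 1) (Submonoid.one_mem _) ?_ n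
  rw [map_one, mul_one]

/-- residue lemma -/
lemma exists_residue (β : locA k) :
    ∃ c : k, β - algebraMap (R k) (locA k) (MvPolynomial.C c) ∈ maximalIdeal (locA k) := by
  obtain ⟨g, s, hs, hgs⟩ := exists_rep β
  have hs0 : MvPolynomial.coeff 0 s ≠ 0 := coeff0_primeCompl hs
  refine ⟨MvPolynomial.coeff 0 g / MvPolynomial.coeff 0 s, ?_⟩
  have key : (β - algebraMap (R k) (locA k) (MvPolynomial.C (MvPolynomial.coeff 0 g / MvPolynomial.coeff 0 s))) *
      algebraMap (R k) (locA k) s =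
      algebraMap (R k) (locA k) (g - MvPolynomial.C (MvPolynomial.coeff 0 g / MvPolynomial.coeff 0 s) * s) := by
    rw [map_sub, sub_mul, hgs, map_mul]
  have hmem : g - MvPolynomial.C (MvPolynomial.coeff 0 g / MvPolynomial.coeff 0 s) * s ∈ mxy k := by
    rw [mem_P_iff, MvPolynomial.coeff_sub, MvPolynomial.coeff_C_mul]
    field_simp
    simp
  have := (mem_maxpow_iff hs key 1).2 (by rwa [pow_one])
  rwa [pow_one] at this

-- PART2B
omit [(mxy k).IsPrime] in
lemma eq_fin2 (d : Fin 2 →₀ ℕ) : d = fin2 (d 0) (d 1) := by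
  ext i
  fin_cases i <;> simp

omit [(mxy k).IsPrime] in
lemma sigma_le_sigma {n i j : ℕ} (hi : i < n) (hj : j < n)
    (h : fin2 (2 * i + 1) (2 * (n - 1 - i) + 1) ≤ fin2 (2 * j + 1) (2 * (n - 1 - j) + 1)) :
    i = j := by
  rw [Finsupp.le_def] at h
  have h0 := h 0
  have h1 := h 1
  simp only [fin2_apply0, fin2_apply1] at h0 h1
  omega

omit [(mxy k).IsPrime] in
lemma sigma_inj {n i j : ℕ}
    (h : fin2 (2 * i + 1) (2 * (n - 1 - i) + 1) = fin2 (2 * j + 1) (2 * (n - 1 - j) + 1)) :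
    i = j := by
  have h0 : (2 * i + 1 : ℕ) = 2 * j + 1 := by
    have := congrArg (fun d : Fin 2 →₀ ℕ => d 0) h
    simpa using this
  omega

def Jid (k : Type) [Field k] [(mxy k).IsPrime] (n j : ℕ) : Ideal (locA k) :=
  idealI k ^ n ⊔ Ideal.span (Set.range (fun i : Fin j => zm k n i))

lemma Jid_le_m2n {n j : ℕ} (hj : j ≤ n) : Jid k n j ≤ maximalIdeal (locA k) ^ (2 * n) := by
  rw [Jid]
  apply sup_le (I_le_m2n n)
  rw [Ideal.span_le]
  rintro x ⟨i, rfl⟩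
  exact zm_mem_m2n (lt_of_lt_of_le i.2 hj)

lemma zm_not_mem_Jid {n j : ℕ} (hj : j < n) : zm k n j ∉ Jid k n j := by
  intro hmem
  rw [Jid, Submodule.mem_sup] at hmem
  obtain ⟨u, hu, v, hv, huv⟩ := hmem
  rw [← Ideal.submodule_span_eq, Submodule.mem_span_range_iff_exists_fun] at hv
  obtain ⟨α, hα⟩ := hv
  obtain ⟨s, hsint⟩ :=
    IsLocalization.exist_integer_multiples_of_finite (mxy k).primeCompl α
  choose g hg using hsint
  set hpoly := (s : R k) * zp k n j - ∑ i : Fin j, g i * zp k n i with hhp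
  have halg : algebraMap (R k) (locA k) hpoly =
      algebraMap (R k) (locA k) (s : R k) * u := by
    rw [hhp, map_sub, map_mul, map_sum]
    have : ∀ i : Fin j, algebraMap (R k) (locA k) (g i * zp k n i) =
        algebraMap (R k) (locA k) (s : R k) * (α i • zm k n i) := by
      intro i
      rw [map_mul, hg i, Algebra.smul_def, smul_eq_mul, zm]
      ring
    rw [Finset.sum_congr rfl (fun i _ => this i), ← Finset.mul_sum, hα]
    rw [show (algebraMap (R k) (locA k)) (zp k n j) = u + v from huv.symm]
    ring
  have hQ : hpoly ∈ Q k ^ n := by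
    rw [← algMem_Ipow_iff, halg]
    exact Ideal.mul_mem_left _ _ hu
  rw [Q_pow_eq] at hQ
  have hw2 : w2 (fin2 (2 * j + 1) (2 * (n - 1 - j) + 1)) < n := by
    rw [w2_sigma hj]
    omega
  have hcoeff := hQ _ hw2
  rw [hhp, MvPolynomial.coeff_sub, MvPolynomial.coeff_sum] at hcoeff
  rw [zp_eq_monomial, MvPolynomial.coeff_mul_monomial', if_pos le_rfl, tsub_self, mul_one] at hcoeff
  rw [Finset.sum_eq_zero] at hcoeff
  · exact coeff0_primeCompl s.2 (by simpa using hcoeff)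
  · intro i _
    rw [zp_eq_monomial, MvPolynomial.coeff_mul_monomial', if_neg]
    intro hle
    exact absurd (sigma_le_sigma (lt_trans i.2 hj) hj hle) (by omega)

lemma spanning {n : ℕ} (hn : 1 ≤ n) {x : locA k} (hx : x ∈ maximalIdeal (locA k) ^ (2 * n)) :
    ∃ c : Fin n → k,
      x - ∑ i, algebraMap (R k) (locA k) (MvPolynomial.C (c i)) * zm k n i ∈ idealI k ^ n := by
  obtain ⟨f, s, hs, hxs⟩ := exists_rep x
  have hf : f ∈ mxy k ^ (2 * n) := (mem_maxpow_iff hs hxs _).1 hx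
  rw [P_pow_eq] at hf
  set e : Fin n → k := fun i => MvPolynomial.coeff (fin2 (2 * i + 1) (2 * (n - 1 - i) + 1)) f with he
  set f' := f - ∑ i : Fin n, MvPolynomial.C (e i) * zp k n i with hf'
  have hf'Q : f' ∈ Q k ^ n := by
    rw [Q_pow_eq]
    intro d hd
    rw [hf', MvPolynomial.coeff_sub, MvPolynomial.coeff_sum]
    by_cases hcase : ∃ i : Fin n, d = fin2 (2 * i + 1) (2 * (n - 1 - i) + 1)
    · obtain ⟨i0, hi0⟩ := hcase
      rw [Finset.sum_eq_single i0]
      · rw [hi0, zp_eq_monomial, MvPolynomial.C_mul_monomial, mul_one, MvPolynomial.coeff_monomial, if_pos rfl]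
        simp only [he, ← hi0, sub_self]
      · intro i _ hne
        rw [zp_eq_monomial, MvPolynomial.C_mul_monomial, mul_one, MvPolynomial.coeff_monomial, if_neg]
        rw [hi0]
        exact fun hcon => hne (Fin.ext (sigma_inj hcon))
      · intro hni
        exact absurd (Finset.mem_univ i0) hni
    · have hwdeg : wdeg d < 2 * n := by
        by_contra hge
        push_neg at hge
        simp only [w2] at hd
        simp only [wdeg] at hge
        have hd0 : d 0 % 2 = 1 := by omega
        have hd1 : d 1 % 2 = 1 := by omega
        have hsum : d 0 + d 1 = 2 * n := by omega
        set i0 := (d 0 - 1) / 2 with hi0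
        have hi0n : i0 < n := by omega
        apply hcase
        have h0 : d 0 = 2 * i0 + 1 := by omega
        have h1 : d 1 = 2 * (n - 1 - i0) + 1 := by omega
        exact ⟨⟨i0, hi0n⟩, by rw [eq_fin2 d, h0, h1]⟩
      rw [hf d hwdeg, Finset.sum_eq_zero, sub_self]
      intro i _
      rw [zp_eq_monomial, MvPolynomial.C_mul_monomial, mul_one, MvPolynomial.coeff_monomial, if_neg]
      exact fun hcon => hcase ⟨i, hcon.symm⟩
  obtain ⟨w, hw⟩ := IsLocalization.map_units (locA k) (⟨s, hs⟩ : (mxy k).primeCompl)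
  set β : Fin n → locA k := fun i => algebraMap (R k) (locA k) (MvPolynomial.C (e i)) * ↑w⁻¹ with hβ
  have hres : ∀ i : Fin n, ∃ c : k,
      β i - algebraMap (R k) (locA k) (MvPolynomial.C c) ∈ maximalIdeal (locA k) := fun i => exists_residue (β i)
  choose c hc using hres
  refine ⟨c, ?_⟩
  have hx2 : x = algebraMap (R k) (locA k) f' * ↑w⁻¹ + ∑ i, β i * zm k n i := by
    have h1 : x * ↑w = algebraMap (R k) (locA k) f' + ∑ i, algebraMap (R k) (locA k) (MvPolynomial.C (e i)) * zm k n i := by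
      rw [hw, hxs]
      have : f = f' + ∑ i : Fin n, MvPolynomial.C (e i) * zp k n i := by rw [hf']; ring
      rw [this, map_add, map_sum]
      congr 1
      exact Finset.sum_congr rfl (fun i _ => by rw [map_mul]; rfl)
    calc x = x * ↑w * ↑w⁻¹ := by rw [mul_assoc, Units.mul_inv, mul_one]
      _ = _ := by
          rw [h1, add_mul, Finset.sum_mul]
          congr 1
          exact Finset.sum_congr rfl (fun i _ => by rw [hβ]; ring)
  have hrw : x - ∑ i, algebraMap (R k) (locA k) (MvPolynomial.C (c i)) * zm k n i =
      algebraMap (R k) (locA k) f' * ↑w⁻¹ +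
        ∑ i, (β i - algebraMap (R k) (locA k) (MvPolynomial.C (c i))) * zm k n i := by
    rw [hx2, add_sub_assoc, ← Finset.sum_sub_distrib]
    congr 1
    exact Finset.sum_congr rfl (fun i _ => by ring)
  rw [hrw]
  apply add_mem
  · exact Ideal.mul_mem_right _ _ (algMem_Ipow_iff.2 hf'Q)
  · apply Ideal.sum_mem
    intro i _
    apply m2n1_le_In n
    have := Ideal.mul_mem_mul (hc i) (zm_mem_m2n (k := k) i.2)
    rwa [← pow_succ'] at this

-- PART2C
omit [(mxy k).IsPrime] in
lemma vs_chain_bound {n l : ℕ} (c : ℕ → Submodule k (Fin n → k))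
    (hc : ∀ i < l, c i < c (i + 1)) : l ≤ n := by
  have h : ∀ i, i ≤ l → i ≤ Module.finrank k (c i) := by
    intro i hi
    induction i with
    | zero => omega
    | succ i ih =>
      have h1 := ih (by omega)
      have h2 : Module.finrank k (c i) < Module.finrank k (c (i + 1)) :=
        Submodule.finrank_lt_finrank_of_lt (hc i (by omega))
      omega
  have hl := h l le_rfl
  have hle : Module.finrank k ↥(c l) ≤ Module.finrank k (Fin n → k) :=
    Submodule.finrank_le _
  rw [Module.finrank_fin_fun] at hle
  omega

def T (k : Type) [Field k] [(mxy k).IsPrime] (n : ℕ) (J : Ideal (locA k)) :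
    Submodule k (Fin n → k) where
  carrier := {c | ∑ i, algebraMap (R k) (locA k) (MvPolynomial.C (c i)) * zm k n i ∈ J}
  add_mem' := by
    intro c c' hc hc'
    simp only [Set.mem_setOf_eq] at *
    have heq : ∑ i, algebraMap (R k) (locA k) (MvPolynomial.C ((c + c') i)) * zm k n i
        = (∑ i, algebraMap (R k) (locA k) (MvPolynomial.C (c i)) * zm k n i)
          + ∑ i, algebraMap (R k) (locA k) (MvPolynomial.C (c' i)) * zm k n i := by
      rw [← Finset.sum_add_distrib]
      refine Finset.sum_congr rfl fun i _ => ?_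
      rw [Pi.add_apply, MvPolynomial.C_add, map_add, add_mul]
    rw [heq]
    exact add_mem hc hc'
  zero_mem' := by
    simp only [Set.mem_setOf_eq, Pi.zero_apply, map_zero, zero_mul,
      Finset.sum_const_zero]
    exact zero_mem _
  smul_mem' := by
    intro a c hc
    simp only [Set.mem_setOf_eq] at *
    have heq : ∑ i, algebraMap (R k) (locA k) (MvPolynomial.C ((a • c) i)) * zm k n i
        = algebraMap (R k) (locA k) (MvPolynomial.C a) *
            ∑ i, algebraMap (R k) (locA k) (MvPolynomial.C (c i)) * zm k n i := by
      rw [Finset.mul_sum]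
      refine Finset.sum_congr rfl fun i _ => ?_
      rw [Pi.smul_apply, smul_eq_mul, MvPolynomial.C_mul, map_mul]
      ring
    rw [heq]
    exact Ideal.mul_mem_left _ _ hc
lemma T_mono {n : ℕ} {J J' : Ideal (locA k)} (h : J ≤ J') : T k n J ≤ T k n J' :=
  fun _ hc => h hc

lemma T_strict {n : ℕ} (hn : 1 ≤ n) {J J' : Ideal (locA k)}
    (hJ : idealI k ^ n ≤ J) (hJ' : J' ≤ maximalIdeal (locA k) ^ (2 * n)) (h : J < J') :
    T k n J < T k n J' := by
  obtain ⟨hle, x, hxJ', hxJ⟩ := SetLike.lt_iff_le_and_exists.1 h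
  obtain ⟨c, hc⟩ := spanning hn (hJ' hxJ')
  refine lt_of_le_of_ne (T_mono hle) fun heq => ?_
  have hc1 : c ∈ T k n J' := by
    have : ∑ i, algebraMap (R k) (locA k) (MvPolynomial.C (c i)) * zm k n i
        = x - (x - ∑ i, algebraMap (R k) (locA k) (MvPolynomial.C (c i)) * zm k n i) := by ring
    show ∑ i, algebraMap (R k) (locA k) (MvPolynomial.C (c i)) * zm k n i ∈ J'
    rw [this]
    exact sub_mem hxJ' (hle (hJ hc))
  rw [← heq] at hc1
  apply hxJ
  have hc2 : ∑ i, algebraMap (R k) (locA k) (MvPolynomial.C (c i)) * zm k n i ∈ J := hc1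
  have : x = (x - ∑ i, algebraMap (R k) (locA k) (MvPolynomial.C (c i)) * zm k n i)
      + ∑ i, algebraMap (R k) (locA k) (MvPolynomial.C (c i)) * zm k n i := by ring
  rw [this]
  exact add_mem (hJ hc) hc2

-- PART2D
theorem krull_eq (n : ℕ) (hn : 1 ≤ n) :
    Order.krullDim (Submodule (locA k)
      ↥(Submodule.map (Submodule.mkQ (idealI k ^ n : Submodule (locA k) (locA k)))
        ((maximalIdeal (locA k) ^ (2 * n) : Ideal (locA k)) : Submodule (locA k) (locA k))))
      = (n : WithBot ℕ∞) := by
  set In : Submodule (locA k) (locA k) := (idealI k ^ n : Ideal (locA k)) with hIn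
  set Mm := Submodule.map In.mkQ
    ((maximalIdeal (locA k) ^ (2 * n) : Ideal (locA k)) : Submodule (locA k) (locA k)) with hMm
  apply le_antisymm
  · apply iSup_le
    intro p
    have hlen : p.length ≤ n := by
      set J : Submodule (locA k) ↥Mm → Ideal (locA k) :=
        fun W => Submodule.comap In.mkQ (Submodule.map Mm.subtype W) with hJ
      have hJstrict : StrictMono J :=
        fun W W' h => (Submodule.comap_strictMono_of_surjective (Submodule.mkQ_surjective In))
          ((Submodule.map_strictMono_of_injective (Submodule.injective_subtype Mm)) h)
      have hJ1 : ∀ W, idealI k ^ n ≤ J W := by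
        intro W x hx
        rw [hJ, Submodule.mem_comap]
        have hx0 : In.mkQ x = 0 := by
          rw [Submodule.mkQ_apply, Submodule.Quotient.mk_eq_zero]
          exact hx
        rw [hx0]
        exact zero_mem _
      have hJ2 : ∀ W, J W ≤ maximalIdeal (locA k) ^ (2 * n) := by
        intro W
        have h1 : Submodule.map Mm.subtype W ≤ Mm := Submodule.map_subtype_le _ _
        have h2 : J W ≤ Submodule.comap In.mkQ Mm := Submodule.comap_mono h1
        rw [hMm, Submodule.comap_map_mkQ] at h2
        rwa [sup_of_le_right (I_le_m2n n)] at h2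
      apply vs_chain_bound (fun i => T k n (J (p ⟨min i p.length, by omega⟩)))
      intro i hi
      have hlt : (⟨min i p.length, by omega⟩ : Fin (p.length + 1)) <
          ⟨min (i + 1) p.length, by omega⟩ := by
        rw [Fin.lt_def]
        simp only [Fin.val_mk]
        omega
      exact T_strict hn (hJ1 _) (hJ2 _) (hJstrict (p.strictMono hlt))
    exact_mod_cast hlen
  · have hmaple : ∀ j : ℕ, j ≤ n →
        Submodule.map In.mkQ (Jid k n j : Submodule (locA k) (locA k)) ≤ Mm :=
      fun j hj => Submodule.map_mono (Jid_le_m2n hj)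
    have hstep : ∀ i : Fin n,
        (Submodule.comap Mm.subtype (Submodule.map In.mkQ (Jid k n i.castSucc))
          : Submodule (locA k) ↥Mm) <
        Submodule.comap Mm.subtype (Submodule.map In.mkQ (Jid k n i.succ)) := by
      intro i
      have hisucc : (i.succ : ℕ) = (i : ℕ) + 1 := rfl
      have hIleJid : ∀ j, In ≤ (Jid k n j : Submodule (locA k) (locA k)) := fun j => le_sup_left
      have hlt : Submodule.map In.mkQ (Jid k n i.castSucc : Submodule (locA k) (locA k)) <
          Submodule.map In.mkQ (Jid k n i.succ) := by
        have hmono : Jid k n i.castSucc ≤ Jid k n i.succ := by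
          apply sup_le_sup_left
          apply Submodule.span_mono
          rintro x ⟨t, rfl⟩
          refine ⟨⟨t, by rw [hisucc]; have := t.2; simp at this ⊢⟩, rfl⟩
        refine lt_of_le_of_ne (Submodule.map_mono hmono) fun heq => ?_
        have hcomap := congrArg (Submodule.comap In.mkQ) heq
        rw [Submodule.comap_map_mkQ, Submodule.comap_map_mkQ,
          sup_of_le_right (hIleJid _), sup_of_le_right (hIleJid _)] at hcomap
        have hzmem : zm k n i ∈ Jid k n i.succ := by
          apply le_sup_right (α := Ideal (locA k))
          apply Submodule.subset_span
          exact ⟨⟨i, by rw [hisucc]; omega⟩, rfl⟩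
        rw [← hcomap] at hzmem
        exact zm_not_mem_Jid i.2 hzmem
      refine lt_of_le_of_ne (Submodule.comap_mono hlt.le) fun heq => ?_
      have hmap := congrArg (Submodule.map Mm.subtype) heq
      rw [Submodule.map_comap_subtype, Submodule.map_comap_subtype,
        inf_of_le_right (hmaple _ (by simp [Fin.is_le])),
        inf_of_le_right (hmaple _ (by rw [hisucc]; omega))] at hmap
      exact hlt.ne hmap
    have hp := Order.LTSeries.length_le_krullDim
      (⟨n, fun i => Submodule.comap Mm.subtype (Submodule.map In.mkQ (Jid k n i)), hstep⟩ :
        LTSeries (Submodule (locA k) ↥Mm))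
    exact hp

end Main

end Ex19
end Ex19work

/-- In `A = k[x,y]_(x,y)` with `I = (x²,y²)`: the integral closure of `Iⁿ` is `m^(2n)`,
and `λ(Īⁿ/Iⁿ) = n`, for all `n ≥ 1`. -/
theorem stmt19 (k : Type) [Field k] [(mxy k).IsPrime] :
    ∀ n : ℕ, 1 ≤ n →
      ((idealI k ^ n).intCl = (maximalIdeal (locA k)) ^ (2 * n)) ∧
      (lamNat (locA k)
        (Submodule.map (Submodule.mkQ ((idealI k ^ n : Ideal (locA k)) : Submodule (locA k) (locA k)))
          ((idealI k ^ n).intCl : Submodule (locA k) (locA k))) = n) := by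
  intro n hn
  refine ⟨Ex19.part1 n hn, ?_⟩
  rw [Ex19.part1 n hn, lamNat, Ex19.krull_eq n hn,
    show ((n : WithBot ℕ∞)) = WithBot.some ((n : ℕ∞)) from rfl, WithBot.unbotD_coe,
    ENat.toNat_coe]

end
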